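/- Let d be an odd positive integer, let γ = (γ_1,…,γ_d) and Γ = (Γ_1,…,Γ_d) be two left-handed Clifford families of size d acting on ℂ^n with n = 2^{(d−1)/2}, let κ > 0 and let b_1,…,b_d be nonzero real numbers. Set M = Σ_{j=1}^d b_j (γ_j ⊗ Γ_j) and |b| = Σ_{j=1}^d |b_j|. Suppose v ∈ ℂ^{n²} satisfies M v = |b| v, and define φ : ℝ^d → ℂ^{n²} by φ(x) = exp(−Σ_{j=1}^d |b_j| x_j² / (2κ)) · v. Then for every x ∈ ℝ^d, −κ² Σ_{j=1}^d ∂_j² φ(x) + (Σ_{j=1}^d b_j² x_j²) φ(x) − κ M φ(x) = 0. -/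

import Mathlib

open Matrix

/-- Partial derivative in the `j`-th coordinate direction of a function on `ℝ^d`. -/
noncomputable def pderiv1 {d : ℕ} {E : Type*} [NormedAddCommGroup E] [NormedSpace ℝ E]
    (ψ : (Fin d → ℝ) → E) (j : Fin d) (x : Fin d → ℝ) : E :=
  fderiv ℝ ψ x (Pi.single j 1)

section Aux

variable {d : ℕ}

/-- derivative of `y ↦ c * (y j)^2` -/
lemma hasFDerivAt_sq (c : ℝ) (j : Fin d) (y : Fin d → ℝ) :
    HasFDerivAt (fun y : Fin d → ℝ => c * (y j) ^ 2)
      ((c * (2 * y j)) • ContinuousLinearMap.proj (R := ℝ) (φ := fun _ : Fin d => ℝ) j) y := by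
  have hp : HasFDerivAt (fun y : Fin d → ℝ => y j)
      (ContinuousLinearMap.proj (R := ℝ) (φ := fun _ : Fin d => ℝ) j) y :=
    (ContinuousLinearMap.proj (R := ℝ) (φ := fun _ : Fin d => ℝ) j).hasFDerivAt
  have h2 := (hp.fun_mul hp).const_mul c
  have : (fun y : Fin d → ℝ => c * (y j * y j)) = fun y : Fin d → ℝ => c * (y j) ^ 2 := by
    funext z; ring
  rw [this] at h2
  convert! h2 using 1
  ext z
  simp [ContinuousLinearMap.smul_apply]
  ring

lemma hasFDerivAt_gauss (c : Fin d → ℝ) (κ : ℝ) (y : Fin d → ℝ) :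
    HasFDerivAt (fun y : Fin d → ℝ =>
        Complex.exp (((-(∑ j, c j * (y j) ^ 2)) / (2 * κ) : ℝ) : ℂ))
      (Complex.exp (((-(∑ j, c j * (y j) ^ 2)) / (2 * κ) : ℝ) : ℂ) •
        (Complex.ofRealCLM.comp
          (∑ j, ((-(c j * (2 * y j))) / (2 * κ)) •
            ContinuousLinearMap.proj (R := ℝ) (φ := fun _ : Fin d => ℝ) j))) y := by
  have hu : HasFDerivAt (fun y : Fin d → ℝ => (-(∑ j, c j * (y j) ^ 2)) / (2 * κ))
      (∑ j, ((-(c j * (2 * y j))) / (2 * κ)) •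
        ContinuousLinearMap.proj (R := ℝ) (φ := fun _ : Fin d => ℝ) j) y := by
    have hS : HasFDerivAt (fun y : Fin d → ℝ => ∑ j, c j * (y j) ^ 2)
        (∑ j, (c j * (2 * y j)) • ContinuousLinearMap.proj (R := ℝ)
          (φ := fun _ : Fin d => ℝ) j) y :=
      HasFDerivAt.fun_sum fun j _ => hasFDerivAt_sq (c j) j y
    have := hS.fun_neg.const_mul ((2 * κ)⁻¹)
    have heq : (fun y : Fin d → ℝ => (2 * κ)⁻¹ * -∑ j, c j * y j ^ 2)
        = fun y : Fin d → ℝ => (-(∑ j, c j * (y j) ^ 2)) / (2 * κ) := by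
      funext z; rw [div_eq_inv_mul]
    rw [heq] at this
    convert! this using 1
    rw [smul_neg, Finset.smul_sum, ← Finset.sum_neg_distrib]
    refine Finset.sum_congr rfl fun j _ => ?_
    rw [smul_smul, ← neg_smul]
    congr 1
    field_simp
  have hf : HasFDerivAt (fun y : Fin d → ℝ =>
      (((-(∑ j, c j * (y j) ^ 2)) / (2 * κ) : ℝ) : ℂ))
      (Complex.ofRealCLM.comp
        (∑ j, ((-(c j * (2 * y j))) / (2 * κ)) •
          ContinuousLinearMap.proj (R := ℝ) (φ := fun _ : Fin d => ℝ) j)) y :=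
    Complex.ofRealCLM.hasFDerivAt.comp y hu
  exact hf.cexp

/-- evaluating the sum-of-projections at a basis vector -/
lemma sum_proj_single (a : Fin d → ℝ) (j : Fin d) :
    (∑ i, (a i) • ContinuousLinearMap.proj (R := ℝ) (φ := fun _ : Fin d => ℝ) i)
      (Pi.single j 1) = a j := by
  rw [ContinuousLinearMap.sum_apply]
  rw [Finset.sum_eq_single j]
  · simp
  · intro i _ hij
    simp [ContinuousLinearMap.proj_apply, Pi.single_apply, hij]
  · simp

end Aux

/-- the Gaussian state built from an extremal eigenvector of
`M = Σ_j b_j (γ_j ⊗ Γ_j)` is a zero mode of the harmonic operator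
`−κ²Δ + Σ_j b_j² x_j² − κ M`. -/
theorem gaussian_zero_mode
    (d : ℕ) (hd : Odd d) (n : ℕ) (hn : n = 2 ^ ((d - 1) / 2))
    (γ Γm : Fin d → Matrix (Fin n) (Fin n) ℂ)
    (hγsa : ∀ j, (γ j)ᴴ = γ j)
    (hγac : ∀ i j, γ i * γ j + γ j * γ i =
      if i = j then (2 : ℂ) • (1 : Matrix (Fin n) (Fin n) ℂ) else 0)
    (hγhand : (List.ofFn γ).prod = (Complex.I) ^ ((d - 1) / 2) • (1 : Matrix (Fin n) (Fin n) ℂ))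
    (hΓsa : ∀ j, (Γm j)ᴴ = Γm j)
    (hΓac : ∀ i j, Γm i * Γm j + Γm j * Γm i =
      if i = j then (2 : ℂ) • (1 : Matrix (Fin n) (Fin n) ℂ) else 0)
    (hΓhand : (List.ofFn Γm).prod = (Complex.I) ^ ((d - 1) / 2) • (1 : Matrix (Fin n) (Fin n) ℂ))
    (κ : ℝ) (hκ : 0 < κ) (b : Fin d → ℝ) (hb : ∀ j, b j ≠ 0)
    (M : Matrix (Fin n × Fin n) (Fin n × Fin n) ℂ)
    (hM : M = ∑ j, (b j : ℂ) • Matrix.kroneckerMap (· * ·) (γ j) (Γm j))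
    (v : Fin n × Fin n → ℂ) (hv : M.mulVec v = ((∑ j, |b j| : ℝ) : ℂ) • v)
    (φ : (Fin d → ℝ) → (Fin n × Fin n) → ℂ)
    (hφ : φ = fun x => Complex.exp (((-(∑ j, |b j| * (x j) ^ 2)) / (2 * κ) : ℝ) : ℂ) • v)
    (x : Fin d → ℝ) :
    (-(κ : ℂ) ^ 2) • ∑ j, pderiv1 (fun y => pderiv1 φ j y) j x
      + ((∑ j, (b j) ^ 2 * (x j) ^ 2 : ℝ) : ℂ) • φ x
      - (κ : ℂ) • M.mulVec (φ x) = 0 := by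
  have hκ' : κ ≠ 0 := ne_of_gt hκ
  set c : Fin d → ℝ := fun j => |b j| with hc
  set E : (Fin d → ℝ) → ℂ := fun y =>
    Complex.exp (((-(∑ j, c j * (y j) ^ 2)) / (2 * κ) : ℝ) : ℂ) with hE
  -- first derivative
  have hd1 : ∀ (j : Fin d) (y : Fin d → ℝ),
      pderiv1 φ j y = ((((-(c j * (2 * y j))) / (2 * κ) : ℝ) : ℂ) * E y) • v := by
    intro j y
    have h := (hasFDerivAt_gauss c κ y).smul_const v
    have hφ' : φ = fun y : Fin d → ℝ => E y • v := by
      rw [hφ]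
    rw [pderiv1, hφ']
    rw [h.fderiv]
    rw [ContinuousLinearMap.smulRight_apply, ContinuousLinearMap.smul_apply,
      ContinuousLinearMap.comp_apply, sum_proj_single]
    simp [hE, smul_eq_mul, mul_comm]
  -- second derivative
  have hd2 : ∀ (j : Fin d),
      pderiv1 (fun y => pderiv1 φ j y) j x =
        (((((-(c j * (2 * x j))) / (2 * κ) : ℝ) : ℂ) ^ 2 +
          (((-(2 * c j)) / (2 * κ) : ℝ) : ℂ)) * E x) • v := by
    intro j
    have hfun : (fun y => pderiv1 φ j y) =
        fun y : Fin d → ℝ => ((((-(c j * (2 * y j))) / (2 * κ) : ℝ) : ℂ) * E y) • v := by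
      funext y; exact hd1 j y
    rw [pderiv1, hfun]
    -- derivative of the linear prefactor
    have ha : HasFDerivAt (fun y : Fin d → ℝ =>
        ((((-(c j * (2 * y j))) / (2 * κ) : ℝ) : ℂ)))
        (Complex.ofRealCLM.comp (((-(2 * c j)) / (2 * κ)) •
          ContinuousLinearMap.proj (R := ℝ) (φ := fun _ : Fin d => ℝ) j)) x := by
      have hp : HasFDerivAt (fun y : Fin d → ℝ => y j)
          (ContinuousLinearMap.proj (R := ℝ) (φ := fun _ : Fin d => ℝ) j) x :=
        (ContinuousLinearMap.proj (R := ℝ) (φ := fun _ : Fin d => ℝ) j).hasFDerivAt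
      have h1 := hp.const_mul ((-(2 * c j)) / (2 * κ))
      have heqf : (fun y : Fin d → ℝ => (-(2 * c j)) / (2 * κ) * y j)
          = fun y : Fin d → ℝ => (-(c j * (2 * y j))) / (2 * κ) := by
        funext z; ring
      rw [heqf] at h1
      exact Complex.ofRealCLM.hasFDerivAt.comp x h1
    have hb' := hasFDerivAt_gauss c κ x
    have hmul := ha.fun_mul hb'
    rw [(hmul.smul_const v).fderiv]
    rw [ContinuousLinearMap.smulRight_apply]
    congr 1
    simp only [ContinuousLinearMap.add_apply, ContinuousLinearMap.smul_apply,
      ContinuousLinearMap.comp_apply, Complex.ofRealCLM_apply, smul_eq_mul]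
    rw [sum_proj_single]
    simp only [hE, ContinuousLinearMap.proj_apply, Pi.single_eq_same]
    push_cast
    ring
  -- rewrite the sum of second derivatives
  have hφx : φ x = E x • v := by rw [hφ]
  rw [Finset.sum_congr rfl fun j _ => hd2 j, ← Finset.sum_smul, hφx,
    Matrix.mulVec_smul, hv, smul_smul, smul_smul, smul_smul, smul_smul,
    sub_eq_add_neg, ← neg_smul, ← add_smul, ← add_smul]
  convert zero_smul ℂ v using 2
  push_cast
  simp only [Finset.sum_mul, Finset.mul_sum]
  rw [← Finset.sum_neg_distrib, ← Finset.sum_add_distrib, ← Finset.sum_add_distrib]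
  refine Finset.sum_eq_zero fun i _ => ?_
  rw [show ((b i : ℂ)) ^ 2 = ((c i : ℂ)) ^ 2 from by exact_mod_cast (sq_abs (b i)).symm]
  have hκC : (κ : ℂ) ≠ 0 := by exact_mod_cast hκ'
  field_simp
  ring
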